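/- Let R ⊆ S be an extension of commutative rings satisfying INC, and suppose that for every prime ideal p of R, either pS = S or pS is a prime ideal of S. Then the induced map Spec S → Spec R is injective; more precisely, every prime ideal P of S satisfies P = (P ∩ R)S. -/
import Mathlib


section OhmRushDefs

variable {R S : Type*} [CommRing R] [CommRing S]

/-- The Ohm–Rush content of an element `s` of an `R`-algebra `S` (given by a ring
homomorphism `f : R →+* S`): the intersection of all ideals `I` of `R` with `s ∈ IS`. -/
def ORContent (f : R →+* S) (s : S) : Ideal R :=
  sInf {I : Ideal R | s ∈ Ideal.map f I}

/-- `S` is an Ohm–Rush `R`-algebra if every `s ∈ S` lies in the extension of its content. -/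
def IsOhmRushAlgebra (f : R →+* S) : Prop :=
  ∀ s : S, s ∈ Ideal.map f (ORContent f s)

/-- Flatness of a ring homomorphism. -/
def RingHomFlat (f : R →+* S) : Prop :=
  letI := f.toAlgebra; Module.Flat R S

/-- Faithful flatness of a ring homomorphism. -/
def RingHomFaithfullyFlat (f : R →+* S) : Prop :=
  letI := f.toAlgebra; Module.FaithfullyFlat R S

/-- Module-freeness of a ring homomorphism. -/
def RingHomFree (f : R →+* S) : Prop :=
  letI := f.toAlgebra; Module.Free R S

/-- Weak content algebra: Ohm–Rush and `√c(fg) = √(c(f)c(g))`. -/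
def IsWeakContentAlgebra (f : R →+* S) : Prop :=
  IsOhmRushAlgebra f ∧ ∀ s t : S,
    (ORContent f (s * t)).radical = (ORContent f s * ORContent f t).radical

/-- Semicontent algebra: faithfully flat Ohm–Rush, and for every multiplicative subset `W`
of `R`, if `c(s)R_W = R_W` then `c(st)R_W = c(t)R_W`. -/
def IsSemicontentAlgebra (f : R →+* S) : Prop :=
  IsOhmRushAlgebra f ∧ RingHomFaithfullyFlat f ∧
    ∀ (W : Submonoid R) (s t : S),
      Ideal.map (algebraMap R (Localization W)) (ORContent f s) = ⊤ →
      Ideal.map (algebraMap R (Localization W)) (ORContent f (s * t)) =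
        Ideal.map (algebraMap R (Localization W)) (ORContent f t)

/-- Content algebra: faithfully flat Ohm–Rush satisfying the Dedekind–Mertens type formula. -/
def IsContentAlgebra (f : R →+* S) : Prop :=
  IsOhmRushAlgebra f ∧ RingHomFaithfullyFlat f ∧
    ∀ s t : S, ∃ n : ℕ, 0 < n ∧
      ORContent f s ^ n * ORContent f t = ORContent f s ^ (n - 1) * ORContent f (s * t)

/-- A ring homomorphism satisfies INC if comparable primes of `S` with the same
contraction to `R` are equal. -/
def SatisfiesINC (f : R →+* S) : Prop :=
  ∀ Q Q' : Ideal S, Q.IsPrime → Q'.IsPrime → Q ≤ Q' →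
    Ideal.comap f Q = Ideal.comap f Q' → Q = Q'

/-- A valuation domain: a domain whose divisibility is total. -/
def IsValuationDomain (A : Type*) [CommRing A] : Prop :=
  IsDomain A ∧ ∀ a b : A, ∃ c : A, a * c = b ∨ b * c = a

/-- A Prüfer domain: a domain whose localization at every maximal ideal is a
valuation domain. -/
def IsPruferDomain (A : Type*) [CommRing A] : Prop :=
  IsDomain A ∧ ∀ (P : Ideal A) (hP : P.IsMaximal),
    haveI := hP.isPrime
    IsValuationDomain (Localization.AtPrime P)

end OhmRushDefs

/-- If `R ⊆ S` satisfies INC and primes of `R` extend to primes of `S`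
(or to the unit ideal), then `Spec S → Spec R` is injective, and every prime `P` of `S`
is extended: `P = (P ∩ R)S`. -/
theorem spec_injective_of_inc {R S : Type*} [CommRing R] [CommRing S]
    (f : R →+* S) (hinj : Function.Injective f) (hinc : SatisfiesINC f)
    (hext : ∀ p : Ideal R, p.IsPrime → p.map f = ⊤ ∨ (p.map f).IsPrime) :
    Function.Injective (PrimeSpectrum.comap f) ∧
      ∀ P : Ideal S, P.IsPrime → P = (P.comap f).map f := by
  have key : ∀ P : Ideal S, P.IsPrime → P = (P.comap f).map f := by
    intro P hP
    have hp : (P.comap f).IsPrime := hP.comap f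
    have hle : (P.comap f).map f ≤ P := Ideal.map_comap_le
    have hne : (P.comap f).map f ≠ ⊤ := fun h => hP.ne_top (top_le_iff.mp (h ▸ hle))
    have hprime : ((P.comap f).map f).IsPrime := (hext _ hp).resolve_left hne
    have hcomap : Ideal.comap f ((P.comap f).map f) = Ideal.comap f P :=
      le_antisymm (Ideal.comap_mono hle) Ideal.le_comap_map
    exact (hinc _ _ hprime hP hle hcomap).symm
  refine ⟨?_, key⟩
  intro P Q h
  ext1
  have : P.asIdeal.comap f = Q.asIdeal.comap f := congrArg PrimeSpectrum.asIdeal h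
  rw [key P.asIdeal P.isPrime, key Q.asIdeal Q.isPrime, this]
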